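/- With the malicious-agent setup, for every fixed λ ∈ (0,1) the function d ↦ (∂e/∂λ)(λ, d) is strictly decreasing on [0, ∞). Consequently, if λ₀ ∈ (0,1) is a critical point of e(·, d₁) (i.e., (∂e/∂λ)(λ₀, d₁) = 0) and d₂ > d₁ ≥ 0, then (∂e/∂λ)(λ₀, d₂) < 0; hence the critical points of e(·, d) are strictly increasing with the noise intensity d. -/

import Mathlib

open Matrix


attribute [local instance] Matrix.linftyOpNormedRing Matrix.linftyOpNormedAlgebra

set_option maxHeartbeats 1000000 in
theorem my_aux
    (R M : ℕ)
    (W : Matrix (Fin R ⊕ Fin M) (Fin R ⊕ Fin M) ℝ)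
    (hWnn : ∀ a b, 0 ≤ W a b) (hWrow : ∀ a, ∑ b, W a b = 1)
    (hWinr : ∀ (m : Fin M) (b), W (Sum.inr m) b = if b = Sum.inr m then 1 else 0)
    (i0 : Fin R) (m0 : Fin M) (hpos : 0 < W (Sum.inl i0) (Sum.inr m0))
    (L : ℝ → Matrix (Fin R ⊕ Fin M) (Fin R ⊕ Fin M) ℝ)
    (hL : ∀ lam : ℝ, L lam = lam • (1 - (1 - lam) • W)⁻¹)
    (c : Fin R → (Fin R ⊕ Fin M) → ℝ)
    (e : ℝ → ℝ → ℝ)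
    (he : ∀ t d : ℝ, e t d =
      (∑ j, ∑ i, (L t (Sum.inl i) j - c i j) ^ 2)
        + d * ∑ p : Fin R × Fin M, (L t (Sum.inl p.1) (Sum.inr p.2)) ^ 2)
    (lam : ℝ) (hlam : lam ∈ Set.Ioo (0 : ℝ) 1) :
    ∃ F' G' : ℝ, G' < 0 ∧ ∀ d : ℝ, deriv (fun t => e t d) lam = F' + d * G' := by
  obtain ⟨hlam0, hlam1⟩ := hlam
  set μ : ℝ := 1 - lam with hμdef
  have hμ0 : 0 < μ := by simp [hμdef]; linarith
  have hμ1 : μ < 1 := by simp [hμdef]; linarith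
  set K : ℝ → Matrix (Fin R ⊕ Fin M) (Fin R ⊕ Fin M) ℝ :=
    fun t => 1 - (1 - t) • W with hKdef
  -- Step 1 : determinant is a unit
  have hdet : IsUnit (K lam).det := by
    rw [isUnit_iff_ne_zero]
    intro h0
    obtain ⟨v, hv, hmul⟩ := (Matrix.exists_mulVec_eq_zero_iff).mpr h0
    obtain ⟨a0, -, ha0⟩ := Finset.exists_max_image Finset.univ (fun a => |v a|)
      ⟨Sum.inl i0, Finset.mem_univ _⟩
    have hva : ∀ a, v a = μ * ∑ b, W a b * v b := by
      intro a
      have := congrFun hmul a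
      simp only [Matrix.mulVec, dotProduct, hKdef, Matrix.sub_apply,
        Matrix.smul_apply, Matrix.one_apply, smul_eq_mul, Pi.zero_apply] at this
      have h1 : ∑ b, ((if a = b then (1:ℝ) else 0) - (1 - lam) * W a b) * v b = 0 := this
      have h2 : ∑ b, ((if a = b then (1:ℝ) else 0) - (1 - lam) * W a b) * v b
          = v a - μ * ∑ b, W a b * v b := by
        rw [hμdef]
        simp only [sub_mul, ite_mul, one_mul, zero_mul, Finset.sum_sub_distrib,
          Finset.sum_ite_eq, Finset.mem_univ, if_true, Finset.mul_sum]
        ring_nf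
      rw [h2] at h1
      linarith
    have hb : |v a0| ≤ μ * |v a0| := by
      calc |v a0| = μ * |∑ b, W a0 b * v b| := by rw [hva a0, abs_mul, abs_of_pos hμ0]
        _ ≤ μ * ∑ b, W a0 b * |v b| := by
            apply mul_le_mul_of_nonneg_left _ (le_of_lt hμ0)
            refine (Finset.abs_sum_le_sum_abs _ _).trans ?_
            apply Finset.sum_le_sum
            intro b _
            rw [abs_mul, abs_of_nonneg (hWnn a0 b)]
        _ ≤ μ * ∑ b, W a0 b * |v a0| := by
            apply mul_le_mul_of_nonneg_left _ (le_of_lt hμ0)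
            apply Finset.sum_le_sum
            intro b _
            exact mul_le_mul_of_nonneg_left (ha0 b (Finset.mem_univ b)) (hWnn a0 b)
        _ = μ * |v a0| := by rw [← Finset.sum_mul, hWrow a0, one_mul]
    have hz : |v a0| = 0 := by nlinarith [abs_nonneg (v a0)]
    apply hv
    funext a
    have := ha0 a (Finset.mem_univ a)
    rw [hz] at this
    exact abs_eq_zero.mp (le_antisymm this (abs_nonneg _))
  set Q : Matrix (Fin R ⊕ Fin M) (Fin R ⊕ Fin M) ℝ := (K lam)⁻¹ with hQdef
  have hKQ : K lam * Q = 1 := Matrix.mul_nonsing_inv _ hdet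
  have hQK : Q * K lam = 1 := Matrix.nonsing_inv_mul _ hdet
  -- Step 3 : row of Q at malicious indices
  have hQrow : ∀ (m : Fin M) (b), Q (Sum.inr m) b = (if b = Sum.inr m then 1 else 0) / lam := by
    intro m b
    have h := congrFun (congrFun hKQ (Sum.inr m)) b
    simp only [hKdef, Matrix.mul_apply, Matrix.sub_apply, Matrix.one_apply, Matrix.smul_apply,
      smul_eq_mul, hWinr, sub_mul, ite_mul, one_mul, zero_mul, mul_ite, mul_one, mul_zero,
      Finset.sum_sub_distrib, Finset.sum_ite_eq, Finset.sum_ite_eq', Finset.mem_univ,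
      if_true] at h
    rw [eq_div_iff (ne_of_gt hlam0)]
    by_cases hb : b = Sum.inr m
    · subst hb
      simp only [if_pos rfl] at h ⊢
      linear_combination h
    · rw [if_neg hb]
      rw [if_neg (fun hc => hb hc.symm)] at h
      linear_combination h
  -- Step 4 : Q nonneg
  have hWpnn : ∀ (n : ℕ) (a b), 0 ≤ (W ^ n) a b := by
    intro n
    induction n with
    | zero => intro a b; rw [pow_zero]; rw [Matrix.one_apply]; positivity
    | succ n ih =>
      intro a b
      rw [pow_succ, Matrix.mul_apply]
      exact Finset.sum_nonneg fun c _ => mul_nonneg (ih a c) (hWnn c b)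
  have hWprow : ∀ (n : ℕ) (a), ∑ b, (W ^ n) a b = 1 := by
    intro n
    induction n with
    | zero => intro a; simp [Matrix.one_apply]
    | succ n ih =>
      intro a
      simp only [pow_succ, Matrix.mul_apply]
      rw [Finset.sum_comm]
      calc ∑ c, ∑ b, (W ^ n) a c * W c b = ∑ c, (W ^ n) a c * ∑ b, W c b :=
            Finset.sum_congr rfl fun cc _ => (Finset.mul_sum _ _ _).symm
        _ = 1 := by simp only [hWrow, mul_one]; exact ih a
  have hWple : ∀ (n : ℕ) (a b), (W ^ n) a b ≤ 1 := by
    intro n a b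
    calc (W ^ n) a b ≤ ∑ c, (W ^ n) a c :=
          Finset.single_le_sum (fun c _ => hWpnn n a c) (Finset.mem_univ b)
      _ = 1 := hWprow n a
  have hSnK : ∀ n : ℕ, (∑ k ∈ Finset.range n, μ ^ k • W ^ k) * K lam = 1 - μ ^ n • W ^ n := by
    intro n
    induction n with
    | zero => simp
    | succ n ih =>
      rw [Finset.sum_range_succ, Matrix.add_mul, ih]
      have hstep : (μ ^ n • W ^ n) * K lam = μ ^ n • W ^ n - μ ^ (n + 1) • W ^ (n + 1) := by
        simp only [hKdef]
        rw [Matrix.mul_sub, Matrix.mul_one, Matrix.smul_mul, Matrix.mul_smul, ← hμdef,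
          smul_smul, ← pow_succ μ n, ← pow_succ W n]
      rw [hstep]
      abel
  have hQeq : ∀ (n : ℕ) (a b), Q a b
      = (∑ k ∈ Finset.range n, μ ^ k * (W ^ k) a b) + μ ^ n * (W ^ n * Q) a b := by
    intro n a b
    have hm : (∑ k ∈ Finset.range n, μ ^ k • W ^ k) = Q - μ ^ n • (W ^ n * Q) := by
      calc (∑ k ∈ Finset.range n, μ ^ k • W ^ k)
          = (∑ k ∈ Finset.range n, μ ^ k • W ^ k) * (K lam * Q) := by
            rw [hKQ, Matrix.mul_one]
        _ = ((∑ k ∈ Finset.range n, μ ^ k • W ^ k) * K lam) * Q := by rw [Matrix.mul_assoc]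
        _ = (1 - μ ^ n • W ^ n) * Q := by rw [hSnK n]
        _ = Q - μ ^ n • (W ^ n * Q) := by
            rw [Matrix.sub_mul, Matrix.one_mul, Matrix.smul_mul]
    have := congrFun (congrFun hm a) b
    simp only [Matrix.sum_apply, Matrix.smul_apply, Matrix.sub_apply, smul_eq_mul] at this
    linarith [this]
  have hQnn : ∀ a b, 0 ≤ Q a b := by
    intro a b
    set Cb : ℝ := ∑ c, |Q c b| with hCb
    have hbound : ∀ n : ℕ, -(μ ^ n * Cb) ≤ Q a b := by
      intro n
      have h1 := hQeq n a b
      have h2 : (0:ℝ) ≤ ∑ k ∈ Finset.range n, μ ^ k * (W ^ k) a b :=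
        Finset.sum_nonneg fun k _ =>
          mul_nonneg (pow_nonneg (le_of_lt hμ0) k) (hWpnn k a b)
      have h3 : |(W ^ n * Q) a b| ≤ Cb := by
        rw [Matrix.mul_apply]
        refine (Finset.abs_sum_le_sum_abs _ _).trans ?_
        apply Finset.sum_le_sum
        intro cc _
        rw [abs_mul, abs_of_nonneg (hWpnn n a cc)]
        calc (W ^ n) a cc * |Q cc b| ≤ 1 * |Q cc b| :=
              mul_le_mul_of_nonneg_right (hWple n a cc) (abs_nonneg _)
          _ = |Q cc b| := one_mul _
      have h4 : -(μ ^ n * Cb) ≤ μ ^ n * (W ^ n * Q) a b := by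
        have h5 := (abs_le.mp h3).1
        have h6 : (0:ℝ) ≤ μ ^ n := pow_nonneg (le_of_lt hμ0) n
        nlinarith
      linarith
    have hlim : Filter.Tendsto (fun n : ℕ => -(μ ^ n * Cb)) Filter.atTop (nhds 0) := by
      have h7 := tendsto_pow_atTop_nhds_zero_of_lt_one (le_of_lt hμ0) hμ1
      have := (h7.mul_const Cb).neg
      simpa using this
    exact le_of_tendsto' hlim hbound
  -- Step 5 : Q = 1 + μ • (W * Q)
  have hQid : Q = 1 + μ • (W * Q) := by
    have : (1 - μ • W) * Q = Q - μ • (W * Q) := by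
      rw [Matrix.sub_mul, Matrix.one_mul, Matrix.smul_mul]
    have h2 : Q - μ • (W * Q) = 1 := by rw [← this]; exact hKQ
    rw [sub_eq_iff_eq_add] at h2
    exact h2
  have hQdiag : ∀ a, 1 ≤ Q a a := by
    intro a
    have h := congrFun (congrFun hQid a) a
    simp only [Matrix.add_apply, Matrix.one_apply_eq, Matrix.smul_apply, smul_eq_mul] at h
    have h2 : 0 ≤ (W * Q) a a := by
      rw [Matrix.mul_apply]
      exact Finset.sum_nonneg fun cc _ => mul_nonneg (hWnn a cc) (hQnn cc a)
    nlinarith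
  -- Step 6
  have hQWQ : Q * W * Q = μ⁻¹ • (Q * Q - Q) := by
    have h1 : μ • (W * Q) = Q - 1 := by
      rw [eq_sub_iff_add_eq, add_comm]
      exact hQid.symm
    have h2 : Q * (μ • (W * Q)) = Q * (Q - 1) := by rw [h1]
    rw [Matrix.mul_smul, Matrix.mul_sub, Matrix.mul_one] at h2
    rw [Matrix.mul_assoc, ← h2, smul_smul, inv_mul_cancel₀ (ne_of_gt hμ0), one_smul]
  -- Step 7 : derivatives
  haveI : CompleteSpace (Matrix (Fin R ⊕ Fin M) (Fin R ⊕ Fin M) ℝ) :=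
    FiniteDimensional.complete ℝ _
  have hKder : HasDerivAt K W lam := by
    have h1 : HasDerivAt (fun t : ℝ => (1 : ℝ) - t) (-1) lam :=
      (hasDerivAt_id lam).const_sub 1
    have h2 := (h1.smul_const W).const_sub (1 : Matrix (Fin R ⊕ Fin M) (Fin R ⊕ Fin M) ℝ)
    simp at h2; exact h2
  set D : Matrix (Fin R ⊕ Fin M) (Fin R ⊕ Fin M) ℝ := Q - lam • (Q * W * Q) with hDdef
  obtain ⟨u, hu⟩ := (Matrix.isUnit_iff_isUnit_det _).mpr hdet
  have hQu : (↑u⁻¹ : Matrix (Fin R ⊕ Fin M) (Fin R ⊕ Fin M) ℝ) = Q := by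
    rw [hQdef, Matrix.nonsing_inv_eq_ringInverse, ← hu, Ring.inverse_unit]
  have hinv : HasDerivAt (fun t => Ring.inverse (K t)) (-(Q * W * Q)) lam := by
    have h0 : HasFDerivAt (Ring.inverse)
        (-(ContinuousLinearMap.mulLeftRight ℝ _ ↑u⁻¹ ↑u⁻¹)) (K lam) := by
      rw [← hu]; exact hasFDerivAt_ringInverse u
    have h1 := h0.comp_hasDerivAt lam hKder
    have h2 : (-(ContinuousLinearMap.mulLeftRight ℝ _
        (↑u⁻¹ : Matrix (Fin R ⊕ Fin M) (Fin R ⊕ Fin M) ℝ) ↑u⁻¹)) W = -(Q * W * Q) := by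
      simp [ContinuousLinearMap.mulLeftRight_apply, hQu, Matrix.mul_assoc]
    rw [h2] at h1
    exact h1
  have hLfun : L = fun t => t • Ring.inverse (K t) := by
    funext t
    rw [hL t, Matrix.nonsing_inv_eq_ringInverse]
  have hLder : HasDerivAt L D lam := by
    rw [hLfun]
    have h3 := (hasDerivAt_id lam).smul hinv
    simp only [id_eq] at h3
    have h4 : Ring.inverse (K lam) = Q := by
      rw [hQdef, Matrix.nonsing_inv_eq_ringInverse]
    rw [h4] at h3
    have h5 : lam • -(Q * W * Q) + (1:ℝ) • Q = D := by
      rw [hDdef]; module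
    rw [h5] at h3
    exact h3
  have hent : ∀ a b, HasDerivAt (fun t => L t a b) (D a b) lam := by
    intro a b
    let π : Matrix (Fin R ⊕ Fin M) (Fin R ⊕ Fin M) ℝ →ₗ[ℝ] ℝ :=
      { toFun := fun A => A a b
        map_add' := fun x y => rfl
        map_smul' := fun m x => rfl }
    exact (π.toContinuousLinearMap.hasFDerivAt).comp_hasDerivAt lam hLder
  -- value of L at lam
  have hLval : ∀ a b, L lam a b = lam * Q a b := by
    intro a b
    rw [hL lam]
    rfl
  -- the derivative of each squared entry
  have hsq : ∀ (i : Fin R) (j : Fin R ⊕ Fin M),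
      HasDerivAt (fun t => (L t (Sum.inl i) j - c i j) ^ 2)
        (2 * (L lam (Sum.inl i) j - c i j) * D (Sum.inl i) j) lam := by
    intro i j
    have h := ((hent (Sum.inl i) j).sub_const (c i j)).pow 2
    norm_num at h
    exact h
  set F' : ℝ := ∑ j, ∑ i, 2 * (L lam (Sum.inl i) j - c i j) * D (Sum.inl i) j with hF'def
  set G' : ℝ := ∑ p : Fin R × Fin M,
      2 * L lam (Sum.inl p.1) (Sum.inr p.2) * D (Sum.inl p.1) (Sum.inr p.2) with hG'def
  have hF : HasDerivAt (fun t => ∑ j, ∑ i, (L t (Sum.inl i) j - c i j) ^ 2) F' lam := by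
    exact HasDerivAt.fun_sum fun j _ => HasDerivAt.fun_sum fun i _ => hsq i j
  have hGsq : ∀ p : Fin R × Fin M,
      HasDerivAt (fun t => (L t (Sum.inl p.1) (Sum.inr p.2)) ^ 2)
        (2 * L lam (Sum.inl p.1) (Sum.inr p.2) * D (Sum.inl p.1) (Sum.inr p.2)) lam := by
    intro p
    have h := (hent (Sum.inl p.1) (Sum.inr p.2)).pow 2
    norm_num at h
    exact h
  have hG : HasDerivAt (fun t => ∑ p : Fin R × Fin M,
      (L t (Sum.inl p.1) (Sum.inr p.2)) ^ 2) G' lam :=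
    HasDerivAt.fun_sum fun p _ => hGsq p
  -- the key negativity bound
  have hDle : ∀ (i : Fin R) (m : Fin M), D (Sum.inl i) (Sum.inr m)
      ≤ -(lam / μ * Q (Sum.inl i) (Sum.inr m)) := by
    intro i m
    have hD : D (Sum.inl i) (Sum.inr m)
        = Q (Sum.inl i) (Sum.inr m) - lam * (μ⁻¹
          * ((Q * Q) (Sum.inl i) (Sum.inr m) - Q (Sum.inl i) (Sum.inr m))) := by
      rw [hDdef, hQWQ]
      simp only [Matrix.sub_apply, Matrix.smul_apply, smul_eq_mul]
      try ring
    have hQmm : Q (Sum.inr m) (Sum.inr m) = 1 / lam := by rw [hQrow]; simp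
    have hQQ : Q (Sum.inl i) (Sum.inr m) / lam + Q (Sum.inl i) (Sum.inr m)
        ≤ (Q * Q) (Sum.inl i) (Sum.inr m) := by
      rw [Matrix.mul_apply]
      have hsum : ∑ cc ∈ ({Sum.inl i, Sum.inr m} : Finset (Fin R ⊕ Fin M)),
          Q (Sum.inl i) cc * Q cc (Sum.inr m)
          ≤ ∑ cc, Q (Sum.inl i) cc * Q cc (Sum.inr m) :=
        Finset.sum_le_sum_of_subset_of_nonneg (Finset.subset_univ _)
          (fun cc _ _ => mul_nonneg (hQnn _ _) (hQnn _ _))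
      refine le_trans ?_ hsum
      rw [Finset.sum_pair (by simp : (Sum.inl i : Fin R ⊕ Fin M) ≠ Sum.inr m), hQmm]
      have h2 : Q (Sum.inl i) (Sum.inr m)
          ≤ Q (Sum.inl i) (Sum.inl i) * Q (Sum.inl i) (Sum.inr m) :=
        le_mul_of_one_le_left (hQnn _ _) (hQdiag _)
      have h3 : Q (Sum.inl i) (Sum.inr m) * (1 / lam) = Q (Sum.inl i) (Sum.inr m) / lam := by
        ring
      linarith
    set q : ℝ := Q (Sum.inl i) (Sum.inr m) with hq
    set X : ℝ := (Q * Q) (Sum.inl i) (Sum.inr m) with hX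
    have e1 : q / lam ≤ X - q := by linarith
    have e2 : lam * (μ⁻¹ * (q / lam)) ≤ lam * (μ⁻¹ * (X - q)) := by
      apply mul_le_mul_of_nonneg_left _ (le_of_lt hlam0)
      exact mul_le_mul_of_nonneg_left e1 (le_of_lt (inv_pos.mpr hμ0))
    have e3 : lam * (μ⁻¹ * (q / lam)) = μ⁻¹ * q := by
      field_simp
      try ring
    have e4 : q - μ⁻¹ * q = -(lam / μ * q) := by
      rw [hμdef]
      field_simp
      try ring
    rw [hD]
    linarith
  have hq0 : 0 < Q (Sum.inl i0) (Sum.inr m0) := by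
    have h := congrFun (congrFun hQid (Sum.inl i0)) (Sum.inr m0)
    simp only [Matrix.add_apply, Matrix.one_apply, Matrix.smul_apply, smul_eq_mul,
      reduceCtorEq, if_false] at h
    have hWQ : W (Sum.inl i0) (Sum.inr m0) * Q (Sum.inr m0) (Sum.inr m0)
        ≤ (W * Q) (Sum.inl i0) (Sum.inr m0) := by
      rw [Matrix.mul_apply]
      exact Finset.single_le_sum
        (f := fun cc => W (Sum.inl i0) cc * Q cc (Sum.inr m0))
        (fun cc _ => mul_nonneg (hWnn _ _) (hQnn _ _)) (Finset.mem_univ (Sum.inr m0))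
    have hQmm : Q (Sum.inr m0) (Sum.inr m0) = 1 / lam := by rw [hQrow]; simp
    rw [hQmm] at hWQ
    have h4 : 0 < W (Sum.inl i0) (Sum.inr m0) * (1 / lam) :=
      mul_pos hpos (by positivity)
    nlinarith
  have hterm_le : ∀ p : Fin R × Fin M,
      2 * L lam (Sum.inl p.1) (Sum.inr p.2) * D (Sum.inl p.1) (Sum.inr p.2) ≤ 0 := by
    intro p
    have hl : 0 ≤ L lam (Sum.inl p.1) (Sum.inr p.2) := by
      rw [hLval]; exact mul_nonneg (le_of_lt hlam0) (hQnn _ _)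
    have hD0 : D (Sum.inl p.1) (Sum.inr p.2) ≤ 0 :=
      le_trans (hDle p.1 p.2)
        (neg_nonpos_of_nonneg (mul_nonneg (le_of_lt (div_pos hlam0 hμ0)) (hQnn _ _)))
    exact mul_nonpos_of_nonneg_of_nonpos (by linarith) hD0
  have hstrict : 2 * L lam (Sum.inl i0) (Sum.inr m0) * D (Sum.inl i0) (Sum.inr m0) < 0 := by
    have hl : 0 < L lam (Sum.inl i0) (Sum.inr m0) := by
      rw [hLval]; exact mul_pos hlam0 hq0
    have hD0 : D (Sum.inl i0) (Sum.inr m0) < 0 :=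
      lt_of_le_of_lt (hDle i0 m0)
        (neg_lt_zero.mpr (mul_pos (div_pos hlam0 hμ0) hq0))
    exact mul_neg_of_pos_of_neg (by linarith) hD0
  have hGneg : G' < 0 := by
    have := Finset.sum_lt_sum (f := fun p : Fin R × Fin M =>
        2 * L lam (Sum.inl p.1) (Sum.inr p.2) * D (Sum.inl p.1) (Sum.inr p.2))
      (g := fun _ => (0:ℝ)) (fun p _ => hterm_le p)
      ⟨(i0, m0), Finset.mem_univ _, hstrict⟩
    simpa [hG'def] using this
  refine ⟨F', G', hGneg, fun d => ?_⟩
  have hed : (fun t => e t d) = fun t =>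
      (∑ j, ∑ i, (L t (Sum.inl i) j - c i j) ^ 2)
        + d * ∑ p : Fin R × Fin M, (L t (Sum.inl p.1) (Sum.inr p.2)) ^ 2 :=
    funext fun t => he t d
  rw [hed]
  exact (hF.add (hG.const_mul d)).deriv


set_option maxHeartbeats 1000000 in

/-- In the malicious-agent setup, for every fixed `λ ∈ (0,1)` the map
`d ↦ (∂e/∂λ)(λ, d)` is strictly decreasing on `[0, ∞)`; consequently, if
`λ₀ ∈ (0,1)` is a critical point of `e(·, d₁)` and `d₂ > d₁ ≥ 0`, then
`(∂e/∂λ)(λ₀, d₂) < 0` — the critical points of `e(·, d)` strictly increase with `d`. -/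
theorem critical_points_increase_with_d
    (R M : ℕ) (hR : 2 ≤ R) (hM : 1 ≤ M)
    (W0 : Matrix (Fin R ⊕ Fin M) (Fin R ⊕ Fin M) ℝ)
    (hW0symm : W0.IsSymm)
    (hW0nonneg : ∀ i j, 0 ≤ W0 i j)
    (hW0row : ∀ i, ∑ j, W0 i j = 1)
    (hW0diag : ∀ i, W0 i i = 0)
    (hW0irr : ∀ i j, ∃ k : ℕ, 0 < (W0 ^ k) i j)
    (W : Matrix (Fin R ⊕ Fin M) (Fin R ⊕ Fin M) ℝ)
    (hW : W = Matrix.fromBlocks W0.toBlocks₁₁ W0.toBlocks₁₂ 0 1)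
    (hW12 : W0.toBlocks₁₂ ≠ 0)
    (L : ℝ → Matrix (Fin R ⊕ Fin M) (Fin R ⊕ Fin M) ℝ)
    (hL : ∀ lam : ℝ, L lam = lam • (1 - (1 - lam) • W)⁻¹)
    (S : Matrix (Fin R) (Fin R ⊕ Fin M) ℝ)
    (hS : S = Matrix.of fun i j => if j = Sum.inl i then 1 else 0)
    (CR : Matrix (Fin R) (Fin R) ℝ)
    (hCR : CR = Matrix.of fun _ _ => (R : ℝ)⁻¹)
    (V : Matrix (Fin R ⊕ Fin M) (Fin R ⊕ Fin M) ℝ)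
    (hV : V = Matrix.fromBlocks 0 0 0 1)
    (E : ℝ → Matrix (Fin R) (Fin R ⊕ Fin M) ℝ)
    (hE : ∀ lam : ℝ, E lam = S * L lam - CR * S)
    (e : ℝ → ℝ → ℝ)
    (he : ∀ (lam d : ℝ), e lam d = ((1 + d • V) * (E lam)ᵀ * E lam).trace) :
    (∀ lam ∈ Set.Ioo (0 : ℝ) 1,
        StrictAntiOn (fun d => deriv (fun t => e t d) lam) (Set.Ici 0))
    ∧ ∀ lam0 ∈ Set.Ioo (0 : ℝ) 1, ∀ d1 d2 : ℝ, 0 ≤ d1 → d1 < d2 →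
        deriv (fun t => e t d1) lam0 = 0 → deriv (fun t => e t d2) lam0 < 0 := by
    -- basic facts about W
  have hWnn : ∀ a b, 0 ≤ W a b := by
    rintro (i | m) (j | m') <;>
      simp [hW, Matrix.toBlocks₁₁, Matrix.toBlocks₁₂, Matrix.one_apply, hW0nonneg] <;>
      split <;> norm_num
  have hWrow : ∀ a, ∑ b, W a b = 1 := by
    rintro (i | m)
    · have h0 := hW0row (Sum.inl i)
      rw [Fintype.sum_sum_type] at h0 ⊢
      simp only [hW, Matrix.fromBlocks_apply₁₁, Matrix.fromBlocks_apply₁₂,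
        Matrix.toBlocks₁₁, Matrix.toBlocks₁₂, Matrix.of_apply]
      exact h0
    · rw [Fintype.sum_sum_type]
      simp [hW, Matrix.one_apply]
  have hWinr : ∀ (m : Fin M) (b), W (Sum.inr m) b = if b = Sum.inr m then 1 else 0 := by
    intro m b
    rcases b with j | m'
    · simp [hW]
    · simp [hW, Matrix.one_apply, eq_comm]
  -- a strictly positive regular-to-malicious entry
  have hex : ∃ (i : Fin R) (m : Fin M), W0.toBlocks₁₂ i m ≠ 0 := by
    by_contra h
    push_neg at h
    apply hW12
    ext i m
    simpa using h i m
  obtain ⟨i0, m0, h12⟩ := hex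
  have hpos : 0 < W (Sum.inl i0) (Sum.inr m0) := by
    have h1 : W (Sum.inl i0) (Sum.inr m0) = W0 (Sum.inl i0) (Sum.inr m0) := by
      simp [hW, Matrix.toBlocks₁₂]
    have h2 : W0.toBlocks₁₂ i0 m0 = W0 (Sum.inl i0) (Sum.inr m0) := by
      simp [Matrix.toBlocks₁₂]
    rw [h1, ← h2]
    exact lt_of_le_of_ne (h2 ▸ hW0nonneg (Sum.inl i0) (Sum.inr m0)) (Ne.symm h12)
  -- rewrite e as a sum of squares
  set c : Fin R → (Fin R ⊕ Fin M) → ℝ := fun i j => (CR * S) i j with hc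
  have hEentry : ∀ (t : ℝ) (i : Fin R) (j : Fin R ⊕ Fin M),
      E t i j = L t (Sum.inl i) j - c i j := by
    intro t i j
    rw [hE t]
    simp only [Matrix.sub_apply, hc]
    congr 1
    rw [Matrix.mul_apply]
    simp [hS, Matrix.of_apply]
  have hc0 : ∀ (i : Fin R) (m : Fin M), c i (Sum.inr m) = 0 := by
    intro i m
    simp [hc, Matrix.mul_apply, hS]
  have he' : ∀ t d : ℝ, e t d =
      (∑ j, ∑ i, (L t (Sum.inl i) j - c i j) ^ 2)
        + d * ∑ p : Fin R × Fin M, (L t (Sum.inl p.1) (Sum.inr p.2)) ^ 2 := by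
    intro t d
    rw [he t d]
    have hsplit : (1 + d • V) * (E t)ᵀ * E t
        = (E t)ᵀ * E t + d • (V * ((E t)ᵀ * E t)) := by
      rw [Matrix.add_mul, Matrix.one_mul, Matrix.add_mul, Matrix.smul_mul, Matrix.smul_mul,
        Matrix.mul_assoc]
    rw [hsplit, Matrix.trace_add, Matrix.trace_smul, smul_eq_mul]
    congr 1
    · -- trace (Eᵀ E) = ∑ j ∑ i (E i j)^2
      rw [Matrix.trace]
      simp only [Matrix.diag_apply, Matrix.mul_apply, Matrix.transpose_apply]
      refine Finset.sum_congr rfl fun j _ => Finset.sum_congr rfl fun i _ => ?_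
      rw [hEentry t i j, sq]
    · -- d * trace (V Eᵀ E)
      congr 1
      rw [Matrix.trace, Fintype.sum_sum_type]
      have hleft : ∑ i : Fin R, (V * ((E t)ᵀ * E t)).diag (Sum.inl i) = 0 := by
        apply Finset.sum_eq_zero
        intro i _
        simp [Matrix.diag_apply, Matrix.mul_apply, hV]
      have hright : ∀ m : Fin M, (V * ((E t)ᵀ * E t)).diag (Sum.inr m)
          = ∑ i : Fin R, (L t (Sum.inl i) (Sum.inr m)) ^ 2 := by
        intro m
        have hd1 : (V * ((E t)ᵀ * E t)).diag (Sum.inr m)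
            = ∑ b, V (Sum.inr m) b * ((E t)ᵀ * E t) b (Sum.inr m) := by
          rw [Matrix.diag_apply, Matrix.mul_apply]
        rw [hd1, Fintype.sum_sum_type]
        have h1 : ∑ j : Fin R, V (Sum.inr m) (Sum.inl j)
            * ((E t)ᵀ * E t) (Sum.inl j) (Sum.inr m) = 0 := by
          apply Finset.sum_eq_zero
          intro j _
          simp [hV]
        have h2 : ∑ m' : Fin M, V (Sum.inr m) (Sum.inr m')
            * ((E t)ᵀ * E t) (Sum.inr m') (Sum.inr m)
            = ((E t)ᵀ * E t) (Sum.inr m) (Sum.inr m) := by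
          rw [Finset.sum_eq_single m]
          · simp [hV, Matrix.one_apply]
          · intro b _ hb
            simp [hV, Matrix.one_apply, Ne.symm hb]
          · intro hm
            exact absurd (Finset.mem_univ m) hm
        rw [h1, h2, zero_add]
        simp only [Matrix.mul_apply]
        refine Finset.sum_congr rfl fun i _ => ?_
        rw [Matrix.transpose_apply, hEentry t i (Sum.inr m), hc0 i m, sub_zero, sq]
      rw [hleft, zero_add]
      calc ∑ m : Fin M, (V * ((E t)ᵀ * E t)).diag (Sum.inr m)
          = ∑ m : Fin M, ∑ i : Fin R, (L t (Sum.inl i) (Sum.inr m)) ^ 2 :=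
            Finset.sum_congr rfl fun m _ => hright m
        _ = ∑ p : Fin R × Fin M, (L t (Sum.inl p.1) (Sum.inr p.2)) ^ 2 := by
            rw [Fintype.sum_prod_type]
            exact Finset.sum_comm
  -- apply the key lemma
  have key := fun (lam : ℝ) (hlam : lam ∈ Set.Ioo (0:ℝ) 1) =>
    my_aux R M W hWnn hWrow hWinr i0 m0 hpos L hL c e he' lam hlam
  constructor
  · intro lam hlam
    obtain ⟨F', G', hG, hd⟩ := key lam hlam
    intro d1 _ d2 _ hlt
    simp only
    rw [hd d1, hd d2]
    nlinarith [mul_pos (sub_pos.mpr hlt) (neg_pos.mpr hG)]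
  · intro lam0 hlam0 d1 d2 _ hlt hcrit
    obtain ⟨F', G', hG, hd⟩ := key lam0 hlam0
    rw [hd d1] at hcrit
    rw [hd d2]
    nlinarith [mul_pos (sub_pos.mpr hlt) (neg_pos.mpr hG)]
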